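/- Let (xₙ), (yₙ) ∈ ℓ²(ℤ, ℂ) with discrete-time Fourier transforms x̌(ω) = ∑ₙ xₙ e^{-iωn} and y̌(ω). Then 2·∑_{n∈ℤ} (∑_{k∈ℤ} x_k conj(y_{k-2n})) e^{-2iωn} = x̌(ω)·conj(y̌(ω)) + x̌(ω+π)·conj(y̌(ω+π)). Consequently, ∑_{k∈ℤ} x_k conj(y_{k-2n}) = 0 for all n ∈ ℤ if and only if x̌(ω) conj(y̌(ω)) + x̌(ω+π) conj(y̌(ω+π)) = 0 for (almost) all ω. -/

import Mathlib

/-- The discrete-time Fourier transform of a sequence `(xₙ)_{n∈ℤ}`. -/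
noncomputable def dtft (x : ℤ → ℂ) (ω : ℝ) : ℂ :=
  ∑' n : ℤ, x n * Complex.exp (-(Complex.I * ω * (n : ℝ)))

open Complex MeasureTheory

lemma norm_exp_aux (z : ℂ) (hz : z.re = 0) : ‖Complex.exp z‖ = 1 := by
  rw [Complex.norm_exp, hz, Real.exp_zero]

/-- the shear equiv (d, k) ↦ (k, k - d) -/
def shear : ℤ × ℤ ≃ ℤ × ℤ where
  toFun p := (p.2, p.2 - p.1)
  invFun q := (q.1 - q.2, q.1)
  left_inv p := by simp
  right_inv q := by simp

lemma summable_norm_shear {x y : ℤ → ℂ}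
    (hx1 : Summable fun n : ℤ => ‖x n‖) (hy1 : Summable fun n : ℤ => ‖y n‖) :
    Summable fun p : ℤ × ℤ => ‖x p.2‖ * ‖y (p.2 - p.1)‖ := by
  have h : Summable fun p : ℤ × ℤ => ‖x p.1‖ * ‖y p.2‖ :=
    hx1.mul_of_nonneg hy1 (fun _ => norm_nonneg _) (fun _ => norm_nonneg _)
  have := h.comp_injective shear.injective
  simpa [shear, Function.comp_def] using this

lemma summable_conv {x y : ℤ → ℂ}
    (hx1 : Summable fun n : ℤ => ‖x n‖) (hy1 : Summable fun n : ℤ => ‖y n‖) :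
    Summable fun d : ℤ => ∑' k : ℤ, ‖x k‖ * ‖y (k - d)‖ := by
  have h := summable_norm_shear hx1 hy1
  exact ((summable_prod_of_nonneg (fun p => mul_nonneg (norm_nonneg _) (norm_nonneg _))).1 h).2

lemma norm_inner_le {x y : ℤ → ℂ} (hx1 : Summable fun n : ℤ => ‖x n‖)
    (hy1 : Summable fun n : ℤ => ‖y n‖) (d : ℤ) :
    ‖∑' k : ℤ, x k * (starRingEnd ℂ) (y (k - d))‖ ≤ ∑' k : ℤ, ‖x k‖ * ‖y (k - d)‖ := by
  refine (norm_tsum_le_tsum_norm ?_).trans_eq (by simp [norm_mul])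
  have h := (summable_norm_shear hx1 hy1).prod_factor d
  exact h.congr fun k => by simp [norm_mul]

lemma summable_b {x y : ℤ → ℂ} (hx1 : Summable fun n : ℤ => ‖x n‖)
    (hy1 : Summable fun n : ℤ => ‖y n‖) :
    Summable fun d : ℤ => ‖∑' k : ℤ, x k * (starRingEnd ℂ) (y (k - d))‖ :=
  (summable_conv hx1 hy1).of_nonneg_of_le (fun _ => norm_nonneg _)
    (fun d => norm_inner_le hx1 hy1 d)

lemma dtft_mul_conj {x y : ℤ → ℂ} (hx1 : Summable fun n : ℤ => ‖x n‖)
    (hy1 : Summable fun n : ℤ => ‖y n‖) (ω : ℝ) :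
    dtft x ω * (starRingEnd ℂ) (dtft y ω) =
      ∑' d : ℤ, (∑' k : ℤ, x k * (starRingEnd ℂ) (y (k - d))) *
        Complex.exp (-(Complex.I * ω * (d : ℝ))) := by
  have hxs : Summable fun n : ℤ => ‖x n * Complex.exp (-(Complex.I * ω * (n : ℝ)))‖ := by
    refine hx1.congr fun n => ?_
    rw [norm_mul, norm_exp_aux, mul_one]
    simp [Complex.mul_re]
  have hys : Summable fun n : ℤ => ‖(starRingEnd ℂ) (y n) * Complex.exp (Complex.I * ω * (n : ℝ))‖ := by
    refine hy1.congr fun n => ?_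
    rw [norm_mul, norm_exp_aux, mul_one, RCLike.norm_conj]
    simp [Complex.mul_re]
  have hconj : (starRingEnd ℂ) (dtft y ω) =
      ∑' n : ℤ, (starRingEnd ℂ) (y n) * Complex.exp (Complex.I * ω * (n : ℝ)) := by
    rw [dtft, show ((starRingEnd ℂ) (∑' n : ℤ, y n * Complex.exp (-(Complex.I * ω * (n : ℝ))))) =
      star (∑' n : ℤ, y n * Complex.exp (-(Complex.I * ω * (n : ℝ)))) from rfl, tsum_star]
    congr 1; ext n
    rw [star_mul']
    congr 1
    rw [show star (Complex.exp (-(Complex.I * ω * (n : ℝ)))) =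
      (starRingEnd ℂ) (Complex.exp (-(Complex.I * ω * (n : ℝ)))) from rfl, ← Complex.exp_conj]
    congr 1
    simp
  rw [hconj, dtft, tsum_mul_tsum_of_summable_norm hxs hys]
  -- reindex by shear
  rw [← shear.tsum_eq]
  have hF : Summable fun p : ℤ × ℤ =>
      (x p.2 * (starRingEnd ℂ) (y (p.2 - p.1))) * Complex.exp (-(Complex.I * ω * (p.1 : ℝ))) := by
    apply Summable.of_norm
    refine (summable_norm_shear hx1 hy1).congr fun p => ?_
    rw [norm_mul, norm_mul, norm_exp_aux, mul_one, RCLike.norm_conj]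
    simp [Complex.mul_re]
  have key : ∀ p : ℤ × ℤ,
      (x (shear p).1 * Complex.exp (-(Complex.I * ω * ((shear p).1 : ℝ)))) *
        ((starRingEnd ℂ) (y (shear p).2) * Complex.exp (Complex.I * ω * ((shear p).2 : ℝ))) =
      (x p.2 * (starRingEnd ℂ) (y (p.2 - p.1))) * Complex.exp (-(Complex.I * ω * (p.1 : ℝ))) := by
    intro p
    simp only [shear, Equiv.coe_fn_mk]
    rw [mul_mul_mul_comm, ← Complex.exp_add]
    congr 2
    push_cast
    ring
  rw [tsum_congr key, Summable.tsum_prod' hF (fun d => hF.prod_factor d)]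
  congr 1; ext d
  rw [← tsum_mul_right]

lemma exp_pi_neg (d : ℤ) :
    Complex.exp (-(Complex.I * (Real.pi : ℝ) * (d : ℝ))) = (-1 : ℂ) ^ d := by
  have : (-(Complex.I * (Real.pi : ℝ) * (d : ℝ))) = (-d : ℤ) * ((Real.pi : ℂ) * Complex.I) := by
    push_cast; ring
  rw [this, Complex.exp_int_mul, Complex.exp_pi_mul_I, zpow_neg]
  rcases Int.even_or_odd d with h | h
  · rw [h.neg_one_zpow, inv_one]
  · rw [h.neg_one_zpow]; norm_num

lemma main_identity {x y : ℤ → ℂ} (hx1 : Summable fun n : ℤ => ‖x n‖)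
    (hy1 : Summable fun n : ℤ => ‖y n‖) (ω : ℝ) :
    2 * ∑' n : ℤ, (∑' k : ℤ, x k * (starRingEnd ℂ) (y (k - 2 * n))) *
        Complex.exp (-(2 * Complex.I * ω * (n : ℝ))) =
      dtft x ω * (starRingEnd ℂ) (dtft y ω) +
        dtft x (ω + Real.pi) * (starRingEnd ℂ) (dtft y (ω + Real.pi)) := by
  rw [dtft_mul_conj hx1 hy1 ω, dtft_mul_conj hx1 hy1 (ω + Real.pi)]
  set b : ℤ → ℂ := fun d => ∑' k : ℤ, x k * (starRingEnd ℂ) (y (k - d)) with hb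
  have hbs : Summable fun d : ℤ => ‖b d‖ := summable_b hx1 hy1
  have hsumg : ∀ ω' : ℝ, Summable fun d : ℤ => b d * Complex.exp (-(Complex.I * (ω' : ℝ) * (d : ℝ))) := by
    intro ω'
    apply Summable.of_norm
    refine hbs.congr fun d => ?_
    rw [norm_mul, norm_exp_aux, mul_one]
    simp [Complex.mul_re]
  rw [← Summable.tsum_add (hsumg ω) (hsumg (ω + Real.pi))]
  have step : ∀ d : ℤ,
      b d * Complex.exp (-(Complex.I * ((ω : ℝ) : ℂ) * (d : ℝ))) +
        b d * Complex.exp (-(Complex.I * ((ω + Real.pi : ℝ) : ℂ) * (d : ℝ))) =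
      b d * Complex.exp (-(Complex.I * ω * (d : ℝ))) * (1 + (-1 : ℂ) ^ d) := by
    intro d
    have : Complex.exp (-(Complex.I * ((ω + Real.pi : ℝ) : ℂ) * (d : ℝ))) =
        Complex.exp (-(Complex.I * ω * (d : ℝ))) * (-1 : ℂ) ^ d := by
      rw [← exp_pi_neg d, ← Complex.exp_add]
      congr 1
      push_cast; ring
    rw [this]; ring
  rw [tsum_congr step]
  set f : ℤ → ℂ := fun d => b d * Complex.exp (-(Complex.I * ω * (d : ℝ))) * (1 + (-1 : ℂ) ^ d)
    with hf
  have hinj : Function.Injective (fun n : ℤ => 2 * n) := fun a b h => by dsimp at h; omega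
  have hsupp : Function.support f ⊆ Set.range (fun n : ℤ => 2 * n) := by
    intro d hd
    rcases Int.even_or_odd d with h | h
    · obtain ⟨r, hr⟩ := h; exact ⟨r, by dsimp; omega⟩
    · exfalso; apply hd
      rw [hf]
      simp only [h.neg_one_zpow]
      ring
  rw [← hinj.tsum_eq hsupp, ← tsum_mul_left]
  congr 1; ext n
  rw [hf]
  simp only
  have h1 : ((-1 : ℂ)) ^ (2 * n) = 1 := (even_two_mul n).neg_one_zpow
  have h2 : Complex.exp (-(Complex.I * ω * ((2 * n : ℤ) : ℝ))) =
      Complex.exp (-(2 * Complex.I * ω * (n : ℝ))) := by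
    congr 1; push_cast; ring
  rw [h1, h2]; ring

lemma coeffs_zero (c : ℤ → ℂ) (hc : Summable fun n : ℤ => ‖c n‖)
    (h : ∀ ω : ℝ, ∑' m : ℤ, c m * Complex.exp (-(2 * Complex.I * ω * (m : ℝ))) = 0)
    (n : ℤ) : c n = 0 := by
  set G : ℤ → ℝ → ℂ := fun m ω => c m * Complex.exp ((2 * Complex.I * ((n : ℂ) - (m : ℂ))) * ω)
    with hG
  have hGnorm : ∀ m ω, ‖G m ω‖ = ‖c m‖ := by
    intro m ω
    rw [hG]
    simp only
    rw [norm_mul, norm_exp_aux, mul_one]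
    simp [Complex.mul_re, Complex.mul_im]
  have hzero : ∀ ω : ℝ, ∑' m : ℤ, G m ω = 0 := by
    intro ω
    have : ∀ m : ℤ, G m ω =
        Complex.exp (2 * Complex.I * (n : ℂ) * ω) *
          (c m * Complex.exp (-(2 * Complex.I * ω * (m : ℝ)))) := by
      intro m
      rw [hG]
      simp only
      rw [mul_left_comm, ← Complex.exp_add]
      congr 2
      push_cast; ring
    rw [tsum_congr this, tsum_mul_left, h ω, mul_zero]
  -- swap integral and sum over Ioc 0 π
  have hint : ∀ m : ℤ, IntegrableOn (G m) (Set.Ioc 0 Real.pi) := by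
    intro m
    exact (Continuous.integrableOn_Ioc (by continuity))
  have hswap : ∑' m : ℤ, ∫ ω in Set.Ioc (0:ℝ) Real.pi, G m ω = 0 := by
    rw [MeasureTheory.integral_tsum_of_summable_integral_norm hint ?_]
    · rw [MeasureTheory.setIntegral_congr_fun measurableSet_Ioc
        (fun ω _ => hzero ω)]
      simp
    · refine (hc.mul_right Real.pi).congr fun m => ?_
      have : (fun ω => ‖G m ω‖) = fun _ : ℝ => ‖c m‖ := by
        ext ω; exact hGnorm m ω
      rw [this, MeasureTheory.setIntegral_const]
      simp [Real.volume_Ioc, smul_eq_mul, Real.pi_pos.le, mul_comm]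
  have hval : ∀ m : ℤ, (∫ ω in Set.Ioc (0:ℝ) Real.pi, G m ω) =
      if m = n then c n * Real.pi else 0 := by
    intro m
    rw [← intervalIntegral.integral_of_le Real.pi_pos.le]
    by_cases hm : m = n
    · subst hm
      simp only [if_pos rfl, hG]
      have : ∀ ω : ℝ, c m * Complex.exp ((2 * Complex.I * ((m : ℂ) - (m : ℂ))) * ω) = c m := by
        intro ω; simp
      rw [intervalIntegral.integral_congr (fun ω _ => this ω),
        intervalIntegral.integral_const]
      simp [mul_comm]
    · rw [if_neg hm, hG]
      simp only
      rw [intervalIntegral.integral_const_mul, integral_exp_mul_complex ?_]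
      · have h1 : Complex.exp (2 * Complex.I * ((n : ℂ) - (m : ℂ)) * (Real.pi : ℂ)) = 1 := by
          have : (2 * Complex.I * ((n : ℂ) - (m : ℂ)) * (Real.pi : ℂ)) =
              ((n - m : ℤ) : ℂ) * (2 * (Real.pi : ℂ) * Complex.I) := by push_cast; ring
          rw [this, Complex.exp_int_mul_two_pi_mul_I]
        rw [h1]
        simp
      · simp only [ne_eq, mul_eq_zero, not_or]
        refine ⟨⟨two_ne_zero, Complex.I_ne_zero⟩, sub_ne_zero.mpr ?_⟩
        intro hnm
        exact hm (by exact_mod_cast hnm.symm)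
  rw [tsum_congr hval, tsum_eq_single n (fun m hm => if_neg hm)] at hswap
  rw [if_pos rfl] at hswap
  have := mul_eq_zero.mp hswap
  rcases this with h1 | h2
  · exact h1
  · exfalso
    exact Real.pi_ne_zero (by exact_mod_cast h2)

/-- For sequences `(xₙ), (yₙ) ∈ ℓ¹(ℤ) ∩ ℓ²(ℤ)` with DTFTs `x̌, y̌`:
`2 ∑_{n} (∑_{k} x_k conj(y_{k-2n})) e^{-2iωn} = x̌(ω) conj(y̌(ω)) + x̌(ω+π) conj(y̌(ω+π))`,
and consequently `∑_k x_k conj(y_{k-2n}) = 0` for all `n` iff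
`x̌(ω) conj(y̌(ω)) + x̌(ω+π) conj(y̌(ω+π)) = 0` for all `ω`. -/
theorem dtft_orthogonality_quadrature (x y : ℤ → ℂ)
    (hx1 : Summable fun n : ℤ => ‖x n‖) (hx2 : Summable fun n : ℤ => ‖x n‖ ^ 2)
    (hy1 : Summable fun n : ℤ => ‖y n‖) (hy2 : Summable fun n : ℤ => ‖y n‖ ^ 2) :
    ((∀ ω : ℝ,
      2 * ∑' n : ℤ, (∑' k : ℤ, x k * (starRingEnd ℂ) (y (k - 2 * n))) *
          Complex.exp (-(2 * Complex.I * ω * (n : ℝ))) =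
        dtft x ω * (starRingEnd ℂ) (dtft y ω) +
          dtft x (ω + Real.pi) * (starRingEnd ℂ) (dtft y (ω + Real.pi))) ∧
    ((∀ n : ℤ, (∑' k : ℤ, x k * (starRingEnd ℂ) (y (k - 2 * n))) = 0) ↔
      (∀ ω : ℝ,
        dtft x ω * (starRingEnd ℂ) (dtft y ω) +
          dtft x (ω + Real.pi) * (starRingEnd ℂ) (dtft y (ω + Real.pi)) = 0))) := by

  refine ⟨fun ω => main_identity hx1 hy1 ω, ?_, ?_⟩
  · intro hzero ω
    rw [← main_identity hx1 hy1 ω]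
    have : ∀ n : ℤ, (∑' k : ℤ, x k * (starRingEnd ℂ) (y (k - 2 * n))) *
        Complex.exp (-(2 * Complex.I * ω * (n : ℝ))) = 0 := by
      intro n; rw [hzero n, zero_mul]
    rw [tsum_congr this, tsum_zero, mul_zero]
  · intro hω n
    set c : ℤ → ℂ := fun n => ∑' k : ℤ, x k * (starRingEnd ℂ) (y (k - 2 * n)) with hcdef
    have hcs : Summable fun n : ℤ => ‖c n‖ := by
      have hinj : Function.Injective (fun n : ℤ => 2 * n) := fun a b h => by dsimp at h; omega
      have := (summable_b hx1 hy1).comp_injective hinj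
      exact this.congr fun n => rfl
    have hzero : ∀ ω : ℝ, ∑' m : ℤ, c m * Complex.exp (-(2 * Complex.I * ω * (m : ℝ))) = 0 := by
      intro ω
      have h2 := main_identity hx1 hy1 ω
      rw [hω ω] at h2
      exact mul_left_cancel₀ two_ne_zero (h2.trans (mul_zero (2:ℂ)).symm)
    exact coeffs_zero c hcs hzero n
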